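/- Let θ be irrational with denominator sequence (q_n) and suppose for some a ∈ (0,1) there are infinitely many k ∈ ℕ with ‖kθ‖ ≤ a^k. Then θ is a Liouville number: for every τ > 0 there are infinitely many n with q_{n+1} > q_n^τ. -/

import Mathlib

/-- Distance from a real number to the nearest integer. -/
noncomputable def distNearestInt (x : ℝ) : ℝ := |x - round x|

lemma distNearestInt_pos {x : ℝ} (hx : Irrational x) : 0 < distNearestInt x := by
  rw [distNearestInt, abs_pos, sub_ne_zero]
  exact hx.ne_int (round x)

/-- Key lower bound: `1 < 2 * q (n+1) * ‖q n • θ‖`. -/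
lemma key_lower_bound (θ : ℝ) (hθ : Irrational θ)
    (q : ℕ → ℕ) (hqmono : StrictMono q)
    (hbest : ∀ n k : ℕ, 0 < k → k < q (n + 1) → k ≠ q n →
      distNearestInt ((q n : ℝ) * θ) < distNearestInt ((k : ℝ) * θ))
    (n : ℕ) (hn : 0 < q n) :
    1 < 2 * (q (n + 1) : ℝ) * distNearestInt ((q n : ℝ) * θ) := by
  set p : ℤ := round ((q n : ℝ) * θ) with hp
  set p' : ℤ := round ((q (n + 1) : ℝ) * θ) with hp'
  set ε : ℝ := distNearestInt ((q n : ℝ) * θ) with hε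
  set ε' : ℝ := distNearestInt ((q (n + 1) : ℝ) * θ) with hε'
  have hεdef : ε = |(q n : ℝ) * θ - p| := rfl
  have hε'def : ε' = |(q (n + 1) : ℝ) * θ - p'| := rfl
  have hqlt : q n < q (n + 1) := hqmono (Nat.lt_succ_self n)
  have hεpos : 0 < ε := distNearestInt_pos (hθ.natCast_mul hn.ne')
  have hε'lt : ε' < ε := by
    have := hbest (n + 1) (q n) hn (lt_trans hqlt (hqmono (Nat.lt_succ_self (n + 1))))
      (Nat.ne_of_lt hqlt)
    exact this
  -- the two rationals p / q n and p' / q (n+1) are distinct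
  have hne : (q (n + 1) : ℤ) * p ≠ (q n : ℤ) * p' := by
    intro heq
    have hreal : (q (n + 1) : ℝ) * ((q n : ℝ) * θ - p) = (q n : ℝ) * ((q (n + 1) : ℝ) * θ - p') := by
      have : (((q (n + 1) : ℤ) * p : ℤ) : ℝ) = (((q n : ℤ) * p' : ℤ) : ℝ) :=
        congrArg (Int.cast : ℤ → ℝ) heq
      push_cast at this ⊢
      ring_nf
      ring_nf at this
      linarith [this]
    have habs : (q (n + 1) : ℝ) * ε = (q n : ℝ) * ε' := by
      have h := congrArg abs hreal
      rw [abs_mul, abs_mul, Nat.abs_cast, Nat.abs_cast] at h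
      rw [hεdef, hε'def]; exact h
    have h1 : (q n : ℝ) * ε' < (q n : ℝ) * ε :=
      mul_lt_mul_of_pos_left hε'lt (by exact_mod_cast hn)
    have h2 : (q n : ℝ) * ε < (q (n + 1) : ℝ) * ε :=
      mul_lt_mul_of_pos_right (by exact_mod_cast hqlt) hεpos
    linarith
  have hD : (1 : ℝ) ≤ |((q (n + 1) : ℤ) * p - (q n : ℤ) * p' : ℤ)| := by
    have : (1 : ℤ) ≤ |(q (n + 1) : ℤ) * p - (q n : ℤ) * p'| :=
      Int.one_le_abs (sub_ne_zero.mpr hne)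
    exact_mod_cast this
  have hsplit : ((q (n + 1) : ℤ) * p - (q n : ℤ) * p' : ℤ) =
      ((q (n + 1) : ℤ) * p - (q n : ℤ) * p' : ℤ) := rfl
  have hkey : (1 : ℝ) ≤ (q (n + 1) : ℝ) * ε + (q n : ℝ) * ε' := by
    calc (1 : ℝ) ≤ |((q (n + 1) : ℤ) * p - (q n : ℤ) * p' : ℤ)| := hD
    _ = |(q (n + 1) : ℝ) * ((p : ℝ) - (q n : ℝ) * θ) + (q n : ℝ) * ((q (n + 1) : ℝ) * θ - p')| := by
        push_cast; ring_nf
    _ ≤ |(q (n + 1) : ℝ) * ((p : ℝ) - (q n : ℝ) * θ)| + |(q n : ℝ) * ((q (n + 1) : ℝ) * θ - p')| :=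
        abs_add_le _ _
    _ = (q (n + 1) : ℝ) * ε + (q n : ℝ) * ε' := by
        rw [abs_mul, abs_mul, Nat.abs_cast, Nat.abs_cast,
          abs_sub_comm ((p : ℝ)) ((q n : ℝ) * θ), ← hεdef, ← hε'def]
  have h3 : (q n : ℝ) * ε' < (q (n + 1) : ℝ) * ε := by
    have hq1 : (q n : ℝ) ≤ (q (n + 1) : ℝ) := by exact_mod_cast hqlt.le
    have := mul_lt_mul_of_pos_left hε'lt (show (0:ℝ) < (q n : ℝ) by exact_mod_cast hn)
    have := mul_le_mul_of_nonneg_right hq1 hεpos.le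
    nlinarith
  nlinarith

/-- If `‖kθ‖ ≤ a^k` for some `a ∈ (0,1)` and infinitely many `k`, then `θ` is Liouville:
for every `τ > 0` there are infinitely many `n` with `q_{n+1} > q_n^τ`. -/
theorem exponential_approximation_implies_liouville
    (θ : ℝ) (hθ : Irrational θ)
    (q : ℕ → ℕ) (hq1 : q 1 = 1) (hqmono : StrictMono q)
    (hbest : ∀ n k : ℕ, 0 < k → k < q (n + 1) → k ≠ q n →
      distNearestInt ((q n : ℝ) * θ) < distNearestInt ((k : ℝ) * θ))
    (a : ℝ) (ha0 : 0 < a) (ha1 : a < 1)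
    (happrox : ∃ᶠ k : ℕ in Filter.atTop, distNearestInt ((k : ℝ) * θ) ≤ a ^ k) :
    ∀ τ : ℝ, 0 < τ → ∃ᶠ n in Filter.atTop, (q n : ℝ) ^ τ < (q (n + 1) : ℝ) := by
  intro τ hτ
  rw [Filter.frequently_atTop]
  intro N
  -- eventually 2 * m^τ * a^m < 1
  set c : ℕ := ⌈τ⌉₊ with hc
  have hsum : Filter.Tendsto (fun m : ℕ => (m : ℝ) ^ c * a ^ m) Filter.atTop (nhds 0) := by
    have : ‖a‖ < 1 := by rwa [Real.norm_eq_abs, abs_of_pos ha0]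
    exact (summable_pow_mul_geometric_of_norm_lt_one c this).tendsto_atTop_zero
  have hev : ∀ᶠ m : ℕ in Filter.atTop, (m : ℝ) ^ c * a ^ m < 1 / 2 := by
    have := hsum.eventually_lt_const (show (0:ℝ) < 1/2 by norm_num)
    exact this
  obtain ⟨M0, hM0⟩ := Filter.eventually_atTop.mp hev
  set M : ℕ := max (max M0 1) N with hM
  -- pick k from happrox with k ≥ q M
  obtain ⟨k, hk, hkapprox⟩ := Filter.frequently_atTop.mp happrox (q M)
  have hqM1 : 1 ≤ q M := by
    rw [← hq1]; exact hqmono.monotone (le_max_of_le_left (le_max_right M0 1))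
  have hk1 : 1 ≤ k := le_trans hqM1 hk
  -- find n with q n ≤ k < q (n+1)
  have hex : ∃ m, k < q m := ⟨k + 1, lt_of_lt_of_le (Nat.lt_succ_self k) hqmono.le_apply⟩
  set m0 : ℕ := Nat.find hex with hm0
  have hm0pos : 0 < m0 := by
    rcases Nat.eq_zero_or_pos m0 with h0 | h0
    · exfalso
      have := Nat.find_spec hex
      rw [← hm0, h0] at this
      have hq0 : q 0 < q 1 := hqmono (Nat.lt_succ_self 0)
      omega
    · exact h0
  set n : ℕ := m0 - 1 with hn
  have hn1 : n + 1 = m0 := by omega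
  have hklt : k < q (n + 1) := by rw [hn1]; exact Nat.find_spec hex
  have hqnle : q n ≤ k := by
    by_contra h
    push_neg at h
    exact Nat.find_min hex (by omega : n < m0) h
  -- n ≥ M
  have hnM : M ≤ n := by
    have h1 : q M < q (n + 1) := lt_of_le_of_lt hk hklt
    have h2 : M < n + 1 := hqmono.lt_iff_lt.mp h1
    omega
  have hqnpos : 0 < q n := lt_of_lt_of_le hqM1 (hqmono.monotone hnM)
  -- ‖q n θ‖ ≤ a ^ q n
  have hεle : distNearestInt ((q n : ℝ) * θ) ≤ a ^ k := by
    rcases eq_or_ne k (q n) with heq | hne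
    · rw [← heq]; exact hkapprox
    · exact le_of_lt (lt_of_lt_of_le (hbest n k hk1 hklt hne) hkapprox)
  have hεle2 : distNearestInt ((q n : ℝ) * θ) ≤ a ^ (q n) :=
    le_trans hεle (pow_le_pow_of_le_one ha0.le ha1.le hqnle)
  -- key lemma
  have hkey := key_lower_bound θ hθ q hqmono hbest n hqnpos
  have h2 : 1 < 2 * (q (n + 1) : ℝ) * a ^ (q n) := by
    have hq1pos : (0:ℝ) < 2 * (q (n + 1) : ℝ) := by
      have : 0 < q (n + 1) := lt_trans hqnpos (hqmono (Nat.lt_succ_self n))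
      positivity
    nlinarith [distNearestInt_pos (hθ.natCast_mul hqnpos.ne')]
  -- smallness at q n
  have hqnM0 : M0 ≤ q n := by
    calc M0 ≤ M := le_max_of_le_left (le_max_left M0 1)
    _ ≤ q M := hqmono.le_apply
    _ ≤ q n := hqmono.monotone hnM
  have hsmall : (q n : ℝ) ^ c * a ^ (q n) < 1 / 2 := hM0 (q n) hqnM0
  -- (q n)^τ ≤ (q n)^c
  have hqn1 : (1:ℝ) ≤ (q n : ℝ) := by exact_mod_cast hqnpos
  have hrpow : (q n : ℝ) ^ τ ≤ (q n : ℝ) ^ c := by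
    rw [← Real.rpow_natCast (q n : ℝ) c]
    exact Real.rpow_le_rpow_of_exponent_le hqn1 (Nat.le_ceil τ)
  refine ⟨n, le_trans (le_max_right _ N) hnM, ?_⟩
  have hapow : (0:ℝ) < a ^ (q n) := pow_pos ha0 _
  -- from h2 : 1 < 2 * q(n+1) * a^qn, and 2 * (qn)^c * a^qn < 1
  have : 2 * ((q n : ℝ) ^ c) * a ^ (q n) < 2 * (q (n + 1) : ℝ) * a ^ (q n) := by
    nlinarith
  have hfin : (q n : ℝ) ^ c < (q (n + 1) : ℝ) := by
    have h2a : (0:ℝ) < 2 * a ^ (q n) := by positivity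
    nlinarith
  exact lt_of_le_of_lt hrpow hfin
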